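/- arXiv:2203.10265 — 4 statements merged into one kernel-verified Lean document; each statement's English description precedes it below -/
import Mathlib

section
/- Let X be a Banach space on which the numerical radius is a norm on L(X). Then every extreme point of the closed unit ball of (L(X)_w)* lies in the weak* closure of the set A = { x* ⊗ x : x* ∈ B_{X*}, x ∈ B_X, |x*(x)| = ‖x*‖‖x‖ }. -/
variable {𝕜 : Type*} [RCLike 𝕜] {X : Type*} [NormedAddCommGroup X] [NormedSpace 𝕜 X]

/-- The numerical radius of a bounded linear operator on a Banach space. -/
noncomputable def nrad (T : X →L[𝕜] X) : ℝ :=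
  sSup {r : ℝ | ∃ (x : X) (f : X →L[𝕜] 𝕜), ‖x‖ = 1 ∧ ‖f‖ = 1 ∧ f x = 1 ∧ r = ‖f (T x)‖}

/-- The functional `x* ⊗ x : T ↦ x*(Tx)` on `L(X)`. -/
noncomputable def tensor (f : X →L[𝕜] 𝕜) (x : X) : (X →L[𝕜] X) →L[𝕜] 𝕜 :=
  f.comp (ContinuousLinearMap.apply 𝕜 X x)

/-- The dual norm induced on functionals by the numerical radius norm. -/
noncomputable def wdual (g : (X →L[𝕜] X) →L[𝕜] 𝕜) : ℝ :=
  sSup {r : ℝ | ∃ T : X →L[𝕜] X, nrad T ≤ 1 ∧ r = ‖g T‖}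

open Set Filter Topology Pointwise

section Milman

variable {E : Type*} [AddCommGroup E] [Module ℝ E] [TopologicalSpace E]
  [IsTopologicalAddGroup E] [ContinuousSMul ℝ E]

/-- The convex join of two compact sets is compact. -/
theorem isCompact_convexJoin {s t : Set E} (hs : IsCompact s) (ht : IsCompact t) :
    IsCompact (convexJoin ℝ s t) := by
  have : convexJoin ℝ s t =
      (fun p : (E × E) × ℝ => (1 - p.2) • p.1.1 + p.2 • p.1.2) '' ((s ×ˢ t) ×ˢ Icc 0 1) := by
    ext z
    simp only [mem_convexJoin, mem_image, mem_prod, Prod.exists]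
    constructor
    · rintro ⟨a, ha, b, hb, hz⟩
      rw [segment_eq_image ℝ] at hz
      obtain ⟨θ, hθ, h⟩ := hz
      exact ⟨a, b, θ, ⟨⟨ha, hb⟩, hθ⟩, h⟩
    · rintro ⟨a, b, θ, ⟨⟨ha, hb⟩, hθ⟩, h⟩
      exact ⟨a, ha, b, hb, by rw [segment_eq_image ℝ]; exact ⟨θ, hθ, h⟩⟩
  rw [this]
  exact (((hs.prod ht).prod isCompact_Icc)).image (by fun_prop)

theorem isCompact_convexHull_finite_union {ι : Type*} (t : Finset ι) (C : ι → Set E)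
    (h1 : ∀ i ∈ t, IsCompact (C i)) (h2 : ∀ i ∈ t, Convex ℝ (C i)) :
    IsCompact (convexHull ℝ (⋃ i ∈ t, C i)) := by
  classical
  induction t using Finset.induction_on with
  | empty => simp
  | @insert a s ha IH =>
    have hUC : (⋃ i ∈ insert a s, C i) = C a ∪ ⋃ i ∈ s, C i := by
      simp [Set.iUnion_iUnion_eq_or_left]
    rw [hUC]
    have IH' := IH (fun i hi => h1 i (Finset.mem_insert_of_mem hi))
      (fun i hi => h2 i (Finset.mem_insert_of_mem hi))
    rcases (C a).eq_empty_or_nonempty with h | hne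
    · rw [h, Set.empty_union]; exact IH'
    rcases (⋃ i ∈ s, C i).eq_empty_or_nonempty with h | hne2
    · rw [h, Set.union_empty, (h2 a (Finset.mem_insert_self a s)).convexHull_eq]
      exact h1 a (Finset.mem_insert_self a s)
    rw [convexHull_union hne hne2, (h2 a (Finset.mem_insert_self a s)).convexHull_eq]
    exact isCompact_convexJoin (h1 a (Finset.mem_insert_self a s)) IH'

theorem extreme_mem_of_mem_convexHull_finite_union {ι : Type*} {K : Set E} (hK : Convex ℝ K)
    {x : E} (hx : x ∈ K.extremePoints ℝ) (t : Finset ι) (C : ι → Set E)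
    (hconv : ∀ i ∈ t, Convex ℝ (C i)) (hsub : ∀ i ∈ t, C i ⊆ K)
    (hmem : x ∈ convexHull ℝ (⋃ i ∈ t, C i)) : ∃ i ∈ t, x ∈ C i := by
  classical
  induction t using Finset.induction_on with
  | empty => simp at hmem
  | @insert a s ha IH =>
    have hUC : (⋃ i ∈ insert a s, C i) = C a ∪ ⋃ i ∈ s, C i := by
      simp [Set.iUnion_iUnion_eq_or_left]
    rw [hUC] at hmem
    have hCa := hconv a (Finset.mem_insert_self a s)
    have IH' : x ∈ convexHull ℝ (⋃ i ∈ s, C i) → ∃ i ∈ s, x ∈ C i := fun h =>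
      IH (fun i hi => hconv i (Finset.mem_insert_of_mem hi))
        (fun i hi => hsub i (Finset.mem_insert_of_mem hi)) h
    rcases (C a).eq_empty_or_nonempty with h | hne
    · rw [h, Set.empty_union] at hmem
      obtain ⟨i, hi, hxi⟩ := IH' hmem
      exact ⟨i, Finset.mem_insert_of_mem hi, hxi⟩
    rcases (⋃ i ∈ s, C i).eq_empty_or_nonempty with h | hne2
    · rw [h, Set.union_empty, hCa.convexHull_eq] at hmem
      exact ⟨a, Finset.mem_insert_self a s, hmem⟩
    rw [convexHull_union hne hne2, hCa.convexHull_eq] at hmem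
    obtain ⟨p, hp, q, hq, hpq⟩ := mem_convexJoin.1 hmem
    have hqK : q ∈ K := convexHull_min (Set.iUnion₂_subset fun i hi =>
      hsub i (Finset.mem_insert_of_mem hi)) hK hq
    have hpK : p ∈ K := hsub a (Finset.mem_insert_self a s) hp
    rcases eq_or_ne x p with rfl | hxp
    · exact ⟨a, Finset.mem_insert_self a s, hp⟩
    rcases eq_or_ne x q with rfl | hxq
    · obtain ⟨i, hi, hxi⟩ := IH' hq
      exact ⟨i, Finset.mem_insert_of_mem hi, hxi⟩
    have hopen : x ∈ openSegment ℝ p q :=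
      mem_openSegment_of_ne_left_right (fun h => hxp h.symm) (fun h => hxq h.symm) hpq
    obtain ⟨hpx, -⟩ := (mem_extremePoints.1 hx).2 _ hpK _ hqK hopen
    exact ⟨a, Finset.mem_insert_self a s, hpx ▸ hp⟩

variable [LocallyConvexSpace ℝ E] [T2Space E]

/-- **Milman's theorem**. -/
theorem milman {A K : Set E} (hK : IsCompact K) (hKconv : Convex ℝ K)
    (hKA : K ⊆ closure (convexHull ℝ A)) (hAK : A ⊆ K)
    {x : E} (hx : x ∈ K.extremePoints ℝ) : x ∈ closure A := by
  by_contra hxD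
  set D := closure A with hD
  have hDK : D ⊆ K := closure_minimal hAK hK.isClosed
  have hDcomp : IsCompact D := hK.of_isClosed_subset isClosed_closure hDK
  -- find a suitable neighborhood of 0
  have hN1 : {n : E | x + n ∈ Dᶜ} ∈ 𝓝 (0 : E) := by
    have hcont : Continuous fun n : E => x + n := by fun_prop
    have hmem : x + (0 : E) ∈ Dᶜ := by simpa using hxD
    exact hcont.continuousAt.preimage_mem_nhds (isClosed_closure.isOpen_compl.mem_nhds hmem)
  obtain ⟨N2, hN2, hN2half⟩ := exists_nhds_zero_half hN1
  obtain ⟨M, ⟨hM, hMconv⟩, hMN2⟩ :=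
    (LocallyConvexSpace.convex_basis_zero ℝ E).mem_iff.1 hN2
  set V : Set E := interior (M ∩ -M) with hV
  have hnegM : -M ∈ 𝓝 (0 : E) := by
    have : Continuous (fun z : E => -z) := continuous_neg
    exact this.continuousAt (x := (0 : E)) |>.preimage_mem_nhds (by simpa using hM)
  have hVnhds : V ∈ 𝓝 (0 : E) := interior_mem_nhds.2 (Filter.inter_mem hM hnegM)
  have hVopen : IsOpen V := isOpen_interior
  have h0V : (0 : E) ∈ V := mem_interior_iff_mem_nhds.2 (Filter.inter_mem hM hnegM)
  have hVconv : Convex ℝ V := (hMconv.inter hMconv.neg).interior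
  have hVsymm : -V = V := by
    have h1 : -(M ∩ -M) = M ∩ -M := by
      ext z; simp only [Set.mem_neg, Set.mem_inter_iff, neg_neg]; tauto
    calc -V = (fun z : E => -z) ⁻¹' interior (M ∩ -M) := rfl
    _ = interior ((fun z : E => -z) ⁻¹' (M ∩ -M)) := (Homeomorph.neg E).preimage_interior _
    _ = interior (M ∩ -M) := by rw [show (fun z : E => -z) ⁻¹' (M ∩ -M) = -(M ∩ -M) from rfl, h1]
  have hVN2 : V ⊆ N2 := fun v hv => hMN2 (interior_subset hv).1
  -- cover D by finitely many translates
  obtain ⟨t, htcover⟩ := hDcomp.elim_nhds_subcover' (fun y _ => (y : E) +ᵥ V)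
    (fun y hy => (hVopen.vadd y).mem_nhds ⟨0, h0V, by simp⟩)
  -- the pieces
  set C : D → Set E := fun y => closure (convexHull ℝ (D ∩ ((y : E) +ᵥ V))) with hC
  have hCsubK : ∀ y : D, C y ⊆ K := fun y =>
    closure_minimal (convexHull_min (fun z hz => hDK hz.1) hKconv) hK.isClosed
  have hCcomp : ∀ y : D, IsCompact (C y) := fun y =>
    hK.of_isClosed_subset isClosed_closure (hCsubK y)
  have hCconv : ∀ y : D, Convex ℝ (C y) := fun y => (convex_convexHull ℝ _).closure
  -- K is contained in the convex hull of the pieces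
  have hhull : K ⊆ convexHull ℝ (⋃ y ∈ t, C y) := by
    have hclosed : IsClosed (convexHull ℝ (⋃ y ∈ t, C y)) :=
      (isCompact_convexHull_finite_union t C (fun i _ => hCcomp i)
        (fun i _ => hCconv i)).isClosed
    have hDsub : D ⊆ convexHull ℝ (⋃ y ∈ t, C y) := by
      intro z hz
      obtain ⟨y, hy, hzy⟩ := Set.mem_iUnion₂.1 (htcover hz)
      exact subset_convexHull ℝ _ (Set.mem_iUnion₂.2 ⟨y, hy,
        subset_closure (subset_convexHull ℝ _ ⟨hz, hzy⟩)⟩)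
    refine fun z hz => closure_minimal (convexHull_min
      (fun a haA => hDsub (subset_closure haA)) (convex_convexHull ℝ _)) hclosed (hKA hz)
  -- x lies in one of the pieces
  obtain ⟨y, hy, hxy⟩ := extreme_mem_of_mem_convexHull_finite_union hKconv hx t C
    (fun i _ => hCconv i) (fun i _ => hCsubK i) (hhull hx.1)
  -- derive the contradiction
  have h3 : closure V ⊆ V + V := by
    intro z hz
    have hzn : z +ᵥ V ∈ 𝓝 z := (hVopen.vadd z).mem_nhds ⟨0, h0V, by simp⟩
    obtain ⟨w, hw1, hw2⟩ := mem_closure_iff_nhds.1 hz _ hzn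
    obtain ⟨v, hv, hvw⟩ := hw1
    have : z = w + -v := by
      rw [← hvw]; show z = (z + v) + -v; abel
    rw [this]
    exact Set.add_mem_add hw2 (by rw [← hVsymm]; exact Set.neg_mem_neg.2 hv)
  have hxmem : x ∈ (y : E) +ᵥ (V + V) := by
    have h1 : C y ⊆ closure ((y : E) +ᵥ V) :=
      closure_mono (convexHull_min Set.inter_subset_right (hVconv.vadd _))
    have h2 : closure ((y : E) +ᵥ V) = (y : E) +ᵥ closure V := closure_vadd _ _
    have := h1 hxy
    rw [h2] at this
    obtain ⟨v, hv, hvx⟩ := this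
    exact ⟨v, h3 hv, hvx⟩
  obtain ⟨w, hw, hwx⟩ := hxmem
  obtain ⟨v₁, hv₁, v₂, hv₂, hvw⟩ := Set.mem_add.1 hw
  have hyD : (y : E) ∈ Dᶜ := by
    have h4 : (-v₁) ∈ N2 := hVN2 (by rw [← hVsymm]; exact Set.neg_mem_neg.2 hv₁)
    have h5 : (-v₂) ∈ N2 := hVN2 (by rw [← hVsymm]; exact Set.neg_mem_neg.2 hv₂)
    have h6 : x + (-v₁ + -v₂) ∈ Dᶜ := hN2half _ h4 _ h5
    have heq : x + (-v₁ + -v₂) = (y : E) := by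
      rw [← hwx, ← hvw]; show ((y : E) + (v₁ + v₂)) + (-v₁ + -v₂) = (y : E); abel
    rwa [heq] at h6
  exact hyD y.2

end Milman

section NradLemmas

theorem nrad_le {T : X →L[𝕜] X} {a : ℝ} (ha : 0 ≤ a)
    (h : ∀ (x : X) (f : X →L[𝕜] 𝕜), ‖x‖ = 1 → ‖f‖ = 1 → f x = 1 → ‖f (T x)‖ ≤ a) :
    nrad T ≤ a := by
  apply Real.sSup_le _ ha
  rintro r ⟨x, f, hx, hf, hfx, rfl⟩
  exact h x f hx hf hfx

theorem nrad_nonneg (T : X →L[𝕜] X) : 0 ≤ nrad T := by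
  apply Real.sSup_nonneg
  rintro r ⟨x, f, hx, hf, hfx, rfl⟩
  positivity

theorem nrad_bddAbove (T : X →L[𝕜] X) :
    BddAbove {r : ℝ | ∃ (x : X) (f : X →L[𝕜] 𝕜), ‖x‖ = 1 ∧ ‖f‖ = 1 ∧ f x = 1 ∧ r = ‖f (T x)‖} := by
  refine ⟨‖T‖, ?_⟩
  rintro r ⟨x, f, hx, hf, hfx, rfl⟩
  calc ‖f (T x)‖ ≤ ‖f‖ * ‖T x‖ := f.le_opNorm _
  _ ≤ 1 * (‖T‖ * ‖x‖) := by rw [hf]; exact mul_le_mul_of_nonneg_left (T.le_opNorm x) zero_le_one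
  _ = ‖T‖ := by rw [hx]; ring

theorem nrad_le_norm (T : X →L[𝕜] X) : nrad T ≤ ‖T‖ := by
  refine nrad_le (norm_nonneg T) fun x f hx hf hfx => ?_
  calc ‖f (T x)‖ ≤ ‖f‖ * ‖T x‖ := f.le_opNorm _
  _ ≤ 1 * (‖T‖ * ‖x‖) := by rw [hf]; exact mul_le_mul_of_nonneg_left (T.le_opNorm x) zero_le_one
  _ = ‖T‖ := by rw [hx]; ring

theorem le_nrad {T : X →L[𝕜] X} (x : X) (f : X →L[𝕜] 𝕜) (hx : ‖x‖ = 1) (hf : ‖f‖ = 1)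
    (hfx : f x = 1) : ‖f (T x)‖ ≤ nrad T :=
  le_csSup (nrad_bddAbove T) ⟨x, f, hx, hf, hfx, rfl⟩

theorem nrad_smul_le (c : 𝕜) (T : X →L[𝕜] X) : nrad (c • T) ≤ ‖c‖ * nrad T := by
  refine nrad_le (mul_nonneg (norm_nonneg c) (nrad_nonneg T)) fun x f hx hf hfx => ?_
  have : f ((c • T) x) = c * f (T x) := by
    simp [ContinuousLinearMap.smul_apply, smul_eq_mul]
  rw [this, norm_mul]
  exact mul_le_mul_of_nonneg_left (le_nrad x f hx hf hfx) (norm_nonneg c)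

/-- The key norming-pair inequality: if `‖f x‖ = ‖f‖ * ‖x‖` with `‖f‖, ‖x‖ ≤ 1`, then
`‖f (T x)‖ ≤ nrad T`. -/
theorem tensor_le_nrad {f : X →L[𝕜] 𝕜} {x : X} (hf : ‖f‖ ≤ 1) (hx : ‖x‖ ≤ 1)
    (hfx : ‖f x‖ = ‖f‖ * ‖x‖) (T : X →L[𝕜] X) : ‖f (T x)‖ ≤ nrad T := by
  rcases eq_or_ne f 0 with rfl | hf0
  · simpa using nrad_nonneg T
  rcases eq_or_ne x 0 with rfl | hx0
  · simpa using nrad_nonneg T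
  have hb : (0:ℝ) < ‖f‖ := norm_pos_iff.2 hf0
  have ha : (0:ℝ) < ‖x‖ := norm_pos_iff.2 hx0
  set x₀ : X := ((‖x‖ : 𝕜))⁻¹ • x with hx₀def
  set f₁ : X →L[𝕜] 𝕜 := ((‖f‖ : 𝕜))⁻¹ • f with hf₁def
  have hnx : ‖((‖x‖ : 𝕜))⁻¹‖ = ‖x‖⁻¹ := by
    rw [norm_inv, RCLike.norm_ofReal, abs_of_pos ha]
  have hnf : ‖((‖f‖ : 𝕜))⁻¹‖ = ‖f‖⁻¹ := by
    rw [norm_inv, RCLike.norm_ofReal, abs_of_pos hb]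
  have hx₀ : ‖x₀‖ = 1 := by
    rw [hx₀def, norm_smul, hnx, inv_mul_cancel₀ ha.ne']
  have hf₁ : ‖f₁‖ = 1 := by
    rw [hf₁def, norm_smul ((‖f‖ : 𝕜))⁻¹ f, hnf, inv_mul_cancel₀ hb.ne']
  set θ : 𝕜 := f₁ x₀ with hθdef
  have hθ : ‖θ‖ = 1 := by
    rw [hθdef, hf₁def, hx₀def]
    simp only [ContinuousLinearMap.smul_apply, map_smul, smul_eq_mul]
    rw [norm_mul, norm_mul, hnf, hnx, hfx]
    field_simp
  have hθ0 : θ ≠ 0 := by intro h; rw [h] at hθ; simp at hθ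
  set f₀ : X →L[𝕜] 𝕜 := θ⁻¹ • f₁ with hf₀def
  have hf₀ : ‖f₀‖ = 1 := by
    rw [hf₀def, norm_smul θ⁻¹ f₁, norm_inv, hθ, hf₁]; norm_num
  have hf₀x₀ : f₀ x₀ = 1 := by
    rw [hf₀def]
    simp only [ContinuousLinearMap.smul_apply, smul_eq_mul, ← hθdef]
    exact inv_mul_cancel₀ hθ0
  have key : ‖f₀ (T x₀)‖ ≤ nrad T := le_nrad x₀ f₀ hx₀ hf₀ hf₀x₀
  have hval : f₀ (T x₀) = θ⁻¹ * (((‖f‖ : 𝕜))⁻¹ * (((‖x‖ : 𝕜))⁻¹ * f (T x))) := by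
    rw [hf₀def, hf₁def, hx₀def]
    simp [map_smul, smul_eq_mul]
    ring
  have hcomp : ‖f₀ (T x₀)‖ = ‖f‖⁻¹ * ‖x‖⁻¹ * ‖f (T x)‖ := by
    rw [hval]
    simp only [norm_mul, norm_inv, hθ, hnf, hnx]
    try ring
  rw [hcomp] at key
  have h2 : ‖f (T x)‖ ≤ ‖f‖ * ‖x‖ * nrad T := by
    have := mul_le_mul_of_nonneg_left key (by positivity : (0:ℝ) ≤ ‖f‖ * ‖x‖)
    calc ‖f (T x)‖ = ‖f‖ * ‖x‖ * (‖f‖⁻¹ * ‖x‖⁻¹ * ‖f (T x)‖) := by field_simp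
    _ ≤ ‖f‖ * ‖x‖ * nrad T := this
  calc ‖f (T x)‖ ≤ ‖f‖ * ‖x‖ * nrad T := h2
  _ ≤ 1 * 1 * nrad T := by
      apply mul_le_mul_of_nonneg_right _ (nrad_nonneg T)
      calc ‖f‖ * ‖x‖ ≤ 1 * 1 := mul_le_mul hf hx (norm_nonneg x) zero_le_one
      _ = 1 * 1 := by ring
  _ = nrad T := by ring

end NradLemmas

section WdualLemmas

theorem wdual_bddAbove {c : ℝ} (hc0 : 0 < c) (hc : ∀ T : X →L[𝕜] X, c * ‖T‖ ≤ nrad T)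
    (g : (X →L[𝕜] X) →L[𝕜] 𝕜) :
    BddAbove {r : ℝ | ∃ T : X →L[𝕜] X, nrad T ≤ 1 ∧ r = ‖g T‖} := by
  refine ⟨‖g‖ / c, ?_⟩
  rintro r ⟨T, hT, rfl⟩
  have hTn : ‖T‖ ≤ 1 / c := by
    rw [le_div_iff₀ hc0]
    calc ‖T‖ * c = c * ‖T‖ := by ring
    _ ≤ nrad T := hc T
    _ ≤ 1 := hT
  calc ‖g T‖ ≤ ‖g‖ * ‖T‖ := g.le_opNorm T
  _ ≤ ‖g‖ * (1 / c) := mul_le_mul_of_nonneg_left hTn (norm_nonneg g)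
  _ = ‖g‖ / c := by ring

theorem le_wdual {c : ℝ} (hc0 : 0 < c) (hc : ∀ T : X →L[𝕜] X, c * ‖T‖ ≤ nrad T)
    (g : (X →L[𝕜] X) →L[𝕜] 𝕜) {T : X →L[𝕜] X} (hT : nrad T ≤ 1) : ‖g T‖ ≤ wdual g :=
  le_csSup (wdual_bddAbove hc0 hc g) ⟨T, hT, rfl⟩

theorem wdual_le {g : (X →L[𝕜] X) →L[𝕜] 𝕜} {a : ℝ} (ha : 0 ≤ a)
    (h : ∀ T : X →L[𝕜] X, nrad T ≤ 1 → ‖g T‖ ≤ a) : wdual g ≤ a := by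
  apply Real.sSup_le _ ha
  rintro r ⟨T, hT, rfl⟩
  exact h T hT

theorem wdual_le_one_iff {c : ℝ} (hc0 : 0 < c) (hc : ∀ T : X →L[𝕜] X, c * ‖T‖ ≤ nrad T)
    (g : (X →L[𝕜] X) →L[𝕜] 𝕜) :
    wdual g ≤ 1 ↔ ∀ T : X →L[𝕜] X, nrad T ≤ 1 → ‖g T‖ ≤ 1 :=
  ⟨fun h T hT => (le_wdual hc0 hc g hT).trans h, fun h => wdual_le zero_le_one h⟩

end WdualLemmas

section Repr

variable {𝕜 : Type*} [RCLike 𝕜] {F : Type*} [NormedAddCommGroup F] [NormedSpace 𝕜 F]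

noncomputable instance (priority := 900) weakDualLCS : LocallyConvexSpace ℝ (WeakDual 𝕜 F) :=
  WeakBilin.locallyConvexSpace (B := topDualPairing 𝕜 F)

lemma re_coef_mul (a b : ℝ) (z : 𝕜) :
    RCLike.re (((a:𝕜) - (b:𝕜)*RCLike.I) * z) = a * RCLike.re z + b * RCLike.im z := by
  rw [sub_mul, map_sub, mul_assoc, RCLike.re_ofReal_mul, RCLike.re_ofReal_mul,
    RCLike.mul_re, RCLike.I_re, RCLike.I_im']
  ring

/-- A continuous real-linear functional on the weak-* dual is given by (the real part of)
evaluation at a point of the predual. -/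
theorem exists_eval_of_continuous_real_functional (φ : WeakDual 𝕜 F →L[ℝ] ℝ) :
    ∃ S : F, ∀ h : WeakDual 𝕜 F, φ h = RCLike.re (h S) := by
  classical
  have hU : φ ⁻¹' (Metric.ball (0:ℝ) 1) ∈ 𝓝 (0 : WeakDual 𝕜 F) := by
    have h1 : Metric.ball (0:ℝ) 1 ∈ 𝓝 (φ 0) := by
      rw [map_zero]; exact Metric.ball_mem_nhds _ one_pos
    exact φ.continuous.continuousAt.preimage_mem_nhds h1
  obtain ⟨s, hs, hsub⟩ :=
    ((LinearMap.hasBasis_weakBilin (topDualPairing 𝕜 F)).mem_iff).1 hU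
  obtain ⟨I, r, hr, rfl⟩ := ((topDualPairing 𝕜 F).toSeminormFamily.basisSets_iff).1 hs
  -- functionals vanishing on `I` are in the kernel of `φ`
  have hker : ∀ g : WeakDual 𝕜 F, (∀ y ∈ I, g y = 0) → φ g = 0 := by
    intro g hg
    have hmem : ∀ n : ℕ, φ ((n : ℕ) • g) ∈ Metric.ball (0:ℝ) 1 := by
      intro n
      apply hsub
      refine (Seminorm.mem_ball_zero (p := I.sup (topDualPairing 𝕜 F).toSeminormFamily)).2 ?_
      rw [← Nat.cast_smul_eq_nsmul 𝕜]
      apply Seminorm.finset_sup_apply_lt hr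
      intro y hy
      show ‖(n:𝕜) * g y‖ < r
      rw [hg y hy, mul_zero, norm_zero]
      exact hr
    by_contra h0
    obtain ⟨n, hn⟩ := exists_nat_gt (1 / |φ g|)
    have habs : |φ g| > 0 := abs_pos.2 h0
    have h2 := hmem n
    rw [map_nsmul] at h2
    simp only [Metric.mem_ball, dist_zero_right, Real.norm_eq_abs, nsmul_eq_mul] at h2
    have h3 : 1 / |φ g| < n := hn
    have h4 : 1 < n * |φ g| := by
      rw [div_lt_iff₀ habs] at h3; linarith
    rw [abs_mul, Nat.abs_cast] at h2
    linarith
  -- build the real-linear coordinate functionals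
  let Lre : F → (WeakDual 𝕜 F →ₗ[ℝ] ℝ) := fun y =>
    { toFun := fun g => RCLike.re (g y)
      map_add' := fun g h => by
        have h1 : (g + h : WeakDual 𝕜 F) y = g y + h y := rfl
        simp [h1]
      map_smul' := fun c g => by
        have h1 : ((c • g : WeakDual 𝕜 F)) y = c • (g y) := rfl
        simp [h1, RCLike.smul_re] }
  let Lim : F → (WeakDual 𝕜 F →ₗ[ℝ] ℝ) := fun y =>
    { toFun := fun g => RCLike.im (g y)
      map_add' := fun g h => by
        have h1 : (g + h : WeakDual 𝕜 F) y = g y + h y := rfl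
        simp [h1]
      map_smul' := fun c g => by
        have h1 : ((c • g : WeakDual 𝕜 F)) y = c • (g y) := rfl
        simp [h1, RCLike.smul_im] }
  let L : (↥I × Bool) → (WeakDual 𝕜 F →ₗ[ℝ] ℝ) := fun p =>
    if p.2 then Lre (p.1 : F) else Lim (p.1 : F)
  have hkerL : (⨅ i, LinearMap.ker (L i)) ≤ LinearMap.ker (φ : WeakDual 𝕜 F →ₗ[ℝ] ℝ) := by
    intro g hg
    rw [Submodule.mem_iInf] at hg
    have hzero : ∀ y ∈ I, g y = 0 := by
      intro y hy
      have h1 := hg (⟨y, hy⟩, true)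
      have h2 := hg (⟨y, hy⟩, false)
      rw [LinearMap.mem_ker] at h1 h2
      simp only [L, if_true, if_false, Lre, Lim, LinearMap.coe_mk, AddHom.coe_mk] at h1 h2
      exact RCLike.ext (by simpa using h1) (by simpa using h2)
    rw [LinearMap.mem_ker]
    exact hker g hzero
  have hspan := mem_span_of_iInf_ker_le_ker (L := L) hkerL
  obtain ⟨c, hc⟩ := (Submodule.mem_span_range_iff_exists_fun ℝ).1 hspan
  refine ⟨∑ i : ↥I, (((c (i, true)) : 𝕜) - ((c (i, false)) : 𝕜) * RCLike.I) • (i : F),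
    fun h => ?_⟩
  have h1 : φ h = ∑ i : ↥I × Bool, c i • (L i h) := by
    have h0 := LinearMap.congr_fun hc h
    have h0' : φ h = (φ : WeakDual 𝕜 F →ₗ[ℝ] ℝ) h := rfl
    rw [h0', ← h0]
    simp [LinearMap.sum_apply, LinearMap.smul_apply]
  calc φ h = ∑ i : ↥I × Bool, c i • (L i h) := h1
  _ = ∑ i : ↥I, (c (i, true) * RCLike.re (h (i : F)) + c (i, false) * RCLike.im (h (i : F))) := by
      rw [Fintype.sum_prod_type]
      refine Finset.sum_congr rfl fun i _ => ?_
      rw [Fintype.sum_bool]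
      simp [L, Lre, Lim, smul_eq_mul]
  _ = RCLike.re (h (∑ i : ↥I, (((c (i, true)) : 𝕜) - ((c (i, false)) : 𝕜) * RCLike.I) • (i : F))) := by
      rw [map_sum, map_sum]
      refine (Finset.sum_congr rfl fun i _ => ?_).symm
      rw [map_smul, smul_eq_mul, re_coef_mul]

end Repr

section Main

variable {𝕜 : Type*} [RCLike 𝕜] {X : Type*} [NormedAddCommGroup X] [NormedSpace 𝕜 X]

/-- The norming set `A`. -/
def Aset (𝕜 X : Type*) [RCLike 𝕜] [NormedAddCommGroup X] [NormedSpace 𝕜 X] :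
    Set ((X →L[𝕜] X) →L[𝕜] 𝕜) :=
  {g : (X →L[𝕜] X) →L[𝕜] 𝕜 | ∃ (f : X →L[𝕜] 𝕜) (x : X),
    ‖f‖ ≤ 1 ∧ ‖x‖ ≤ 1 ∧ ‖f x‖ = ‖f‖ * ‖x‖ ∧ g = tensor f x}

theorem tensor_apply (f : X →L[𝕜] 𝕜) (x : X) (T : X →L[𝕜] X) : tensor f x T = f (T x) := rfl

theorem zero_mem_Aset : (0 : (X →L[𝕜] X) →L[𝕜] 𝕜) ∈ Aset 𝕜 X := by
  refine ⟨0, 0, by simp, by simp, by simp, ?_⟩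
  ext T
  simp [tensor_apply]

theorem smul_mem_Aset {θ : 𝕜} (hθ : ‖θ‖ = 1) {g : (X →L[𝕜] X) →L[𝕜] 𝕜} (hg : g ∈ Aset 𝕜 X) :
    θ • g ∈ Aset 𝕜 X := by
  obtain ⟨f, x, hf, hx, hfx, rfl⟩ := hg
  refine ⟨θ • f, x, ?_, hx, ?_, ?_⟩
  · rw [norm_smul θ f, hθ, one_mul]; exact hf
  · rw [ContinuousLinearMap.smul_apply, norm_smul, hθ, one_mul, hfx, norm_smul θ f, hθ, one_mul]
  · ext T
    simp [tensor_apply, ContinuousLinearMap.smul_apply, smul_eq_mul]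

theorem Aset_mem_norm_le {g : (X →L[𝕜] X) →L[𝕜] 𝕜} (hg : g ∈ Aset 𝕜 X)
    {T : X →L[𝕜] X} (hT : nrad T ≤ 1) : ‖g T‖ ≤ 1 := by
  obtain ⟨f, x, hf, hx, hfx, rfl⟩ := hg
  rw [tensor_apply]
  exact (tensor_le_nrad hf hx hfx T).trans hT

/-- The unit ball of the `wdual` norm is contained in the weak-* closed convex hull of `A`. -/
theorem wdual_le_one_mem_closure (hw : ∀ T : X →L[𝕜] X, nrad T = 0 → T = 0)
    {c : ℝ} (hc0 : 0 < c) (hcb : ∀ T : X →L[𝕜] X, c * ‖T‖ ≤ nrad T)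
    {g₀ : (X →L[𝕜] X) →L[𝕜] 𝕜} (hg₀ : wdual g₀ ≤ 1) :
    StrongDual.toWeakDual g₀ ∈
      closure (convexHull ℝ (StrongDual.toWeakDual '' Aset 𝕜 X)) := by
  by_contra hnot
  obtain ⟨φ, u, hφC, hφg⟩ := geometric_hahn_banach_closed_point
    ((convex_convexHull ℝ _).closure) isClosed_closure hnot
  obtain ⟨S, hS⟩ := exists_eval_of_continuous_real_functional φ
  have h0C : StrongDual.toWeakDual (0 : (X →L[𝕜] X) →L[𝕜] 𝕜) ∈
      closure (convexHull ℝ (StrongDual.toWeakDual '' Aset 𝕜 X)) :=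
    subset_closure (subset_convexHull ℝ _ ⟨0, zero_mem_Aset, rfl⟩)
  have hu : 0 < u := by
    have h1 := hφC _ h0C
    have hz : StrongDual.toWeakDual (0 : (X →L[𝕜] X) →L[𝕜] 𝕜) = 0 := rfl
    rwa [hz, map_zero] at h1
  -- every element of `A` satisfies `‖g S‖ ≤ u`
  have hA'b : ∀ ga ∈ Aset 𝕜 X, ‖ga S‖ ≤ u := by
    intro ga hga
    rcases eq_or_ne (ga S) 0 with h | h
    · rw [h, norm_zero]; exact hu.le
    · set θ : 𝕜 := (‖ga S‖ : 𝕜) * (ga S)⁻¹ with hθdef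
      have hθ : ‖θ‖ = 1 := by
        rw [hθdef, norm_mul, norm_inv, RCLike.norm_ofReal, abs_of_nonneg (norm_nonneg _)]
        exact div_self (norm_ne_zero_iff.2 h)
      have hmem := smul_mem_Aset hθ hga
      have hC : StrongDual.toWeakDual (θ • ga) ∈
          closure (convexHull ℝ (StrongDual.toWeakDual '' Aset 𝕜 X)) :=
        subset_closure (subset_convexHull ℝ _ ⟨_, hmem, rfl⟩)
      have h2 := hφC _ hC
      rw [hS] at h2
      have hval : (StrongDual.toWeakDual (θ • ga)) S = ((‖ga S‖ : ℝ) : 𝕜) := by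
        show (θ • ga) S = _
        rw [ContinuousLinearMap.smul_apply, smul_eq_mul, hθdef]
        field_simp
      rw [hval, RCLike.ofReal_re] at h2
      exact h2.le
  -- hence `nrad S ≤ u`
  have hnrS : nrad S ≤ u := by
    refine nrad_le hu.le fun x f hx hf hfx => ?_
    have hmem : tensor f x ∈ Aset 𝕜 X :=
      ⟨f, x, hf.le, hx.le, by rw [hfx, hf, hx]; norm_num, rfl⟩
    have h3 := hA'b _ hmem
    rw [tensor_apply] at h3
    exact h3
  have hre : u < RCLike.re (g₀ S) := by
    have h4 := hφg
    rw [hS] at h4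
    exact h4
  rcases eq_or_lt_of_le (nrad_nonneg S) with h0 | hpos
  · have hSz : S = 0 := hw S h0.symm
    rw [hSz, map_zero, map_zero] at hre
    linarith
  · have hne : ((nrad S : ℝ) : 𝕜) ≠ 0 := by
      simp only [ne_eq, RCLike.ofReal_eq_zero]
      exact hpos.ne'
    have hT' : nrad (((nrad S : ℝ) : 𝕜)⁻¹ • S) ≤ 1 := by
      calc nrad (((nrad S : ℝ) : 𝕜)⁻¹ • S) ≤ ‖((nrad S : ℝ) : 𝕜)⁻¹‖ * nrad S :=
        nrad_smul_le _ _
      _ = (nrad S)⁻¹ * nrad S := by rw [norm_inv, RCLike.norm_ofReal, abs_of_pos hpos]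
      _ = 1 := inv_mul_cancel₀ hpos.ne'
    have hb1 : ‖g₀ (((nrad S : ℝ) : 𝕜)⁻¹ • S)‖ ≤ 1 := (le_wdual hc0 hcb g₀ hT').trans hg₀
    have hgS : ‖g₀ S‖ ≤ nrad S := by
      have hSrw : ((nrad S : ℝ) : 𝕜) • (((nrad S : ℝ) : 𝕜)⁻¹ • S) = S := smul_inv_smul₀ hne S
      calc ‖g₀ S‖ = ‖g₀ (((nrad S : ℝ) : 𝕜) • (((nrad S : ℝ) : 𝕜)⁻¹ • S))‖ := by rw [hSrw]
      _ = ‖((nrad S : ℝ) : 𝕜)‖ * ‖g₀ (((nrad S : ℝ) : 𝕜)⁻¹ • S)‖ := by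
          rw [map_smul, smul_eq_mul, norm_mul]
      _ = nrad S * ‖g₀ (((nrad S : ℝ) : 𝕜)⁻¹ • S)‖ := by
          rw [RCLike.norm_ofReal, abs_of_pos hpos]
      _ ≤ nrad S * 1 := mul_le_mul_of_nonneg_left hb1 hpos.le
      _ = nrad S := mul_one _
    have h5 : RCLike.re (g₀ S) ≤ ‖g₀ S‖ := RCLike.re_le_norm _
    linarith

end Main

/-- Every extreme point of the closed unit ball of `(L(X)_w)*` lies in the weak* closure of
`A = {x*⊗x : ‖x*‖≤1, ‖x‖≤1, |x*(x)| = ‖x*‖‖x‖}`. -/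
theorem stmt_4 {X : Type*} [NormedAddCommGroup X] [NormedSpace 𝕜 X] [CompleteSpace X]
    (hw : ∀ T : X →L[𝕜] X, nrad T = 0 → T = 0)
    (hc : ∃ c > (0 : ℝ), ∀ T : X →L[𝕜] X, c * ‖T‖ ≤ nrad T) :
    ∀ g ∈ Set.extremePoints ℝ {g : (X →L[𝕜] X) →L[𝕜] 𝕜 | wdual g ≤ 1},
      StrongDual.toWeakDual g ∈ closure (StrongDual.toWeakDual ''
        {g : (X →L[𝕜] X) →L[𝕜] 𝕜 | ∃ (f : X →L[𝕜] 𝕜) (x : X),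
          ‖f‖ ≤ 1 ∧ ‖x‖ ≤ 1 ∧ ‖f x‖ = ‖f‖ * ‖x‖ ∧ g = tensor f x}) := by
  obtain ⟨c, hc0, hcb⟩ := hc
  intro g hg
  set Aw : Set (WeakDual 𝕜 (X →L[𝕜] X)) := StrongDual.toWeakDual '' Aset 𝕜 X with hAw
  set K' : Set (WeakDual 𝕜 (X →L[𝕜] X)) := {h | ∀ T : X →L[𝕜] X, nrad T ≤ 1 → ‖h T‖ ≤ 1}
    with hK'
  have hKeq : K' = WeakDual.polar 𝕜 {T : X →L[𝕜] X | nrad T ≤ 1} := by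
    rw [WeakDual.polar_def]
    rfl
  have hnhds : {T : X →L[𝕜] X | nrad T ≤ 1} ∈ nhds (0 : X →L[𝕜] X) := by
    refine Filter.mem_of_superset (Metric.closedBall_mem_nhds 0 one_pos) fun T hT => ?_
    have h1 : ‖T‖ ≤ 1 := by simpa [Metric.mem_closedBall, dist_zero_right] using hT
    exact (nrad_le_norm T).trans h1
  have hKcomp : IsCompact K' := by rw [hKeq]; exact WeakDual.isCompact_polar 𝕜 hnhds
  have hKconv : Convex ℝ K' := by
    intro h₁ hm₁ h₂ hm₂ a b ha hb hab
    intro T hT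
    have hL : ((a • h₁ + b • h₂ : WeakDual 𝕜 (X →L[𝕜] X))) T = a • h₁ T + b • h₂ T := rfl
    rw [hL]
    calc ‖a • h₁ T + b • h₂ T‖ ≤ ‖a • h₁ T‖ + ‖b • h₂ T‖ := norm_add_le _ _
    _ = a * ‖h₁ T‖ + b * ‖h₂ T‖ := by
        rw [norm_smul, norm_smul, Real.norm_eq_abs, Real.norm_eq_abs, abs_of_nonneg ha,
          abs_of_nonneg hb]
    _ ≤ a * 1 + b * 1 := add_le_add (mul_le_mul_of_nonneg_left (hm₁ T hT) ha)
        (mul_le_mul_of_nonneg_left (hm₂ T hT) hb)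
    _ = 1 := by rw [mul_one, mul_one, hab]
  have hAK : Aw ⊆ K' := by
    rintro _ ⟨ga, hga, rfl⟩ T hT
    exact Aset_mem_norm_le hga hT
  have hKA : K' ⊆ closure (convexHull ℝ Aw) := by
    intro h hh
    exact wdual_le_one_mem_closure hw hc0 hcb
      ((wdual_le_one_iff hc0 hcb _).2 fun T hT => hh T hT)
  have hxext : StrongDual.toWeakDual g ∈ K'.extremePoints ℝ := by
    constructor
    · intro T hT
      exact (wdual_le_one_iff hc0 hcb g).1 hg.1 T hT
    · intro h₁ hm₁ h₂ hm₂ hseg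
      obtain ⟨a, b, ha, hb, hab, heq⟩ := hseg
      have hw₁ : wdual (h₁ : (X →L[𝕜] X) →L[𝕜] 𝕜) ≤ 1 :=
        (wdual_le_one_iff hc0 hcb _).2 fun T hT => hm₁ T hT
      have hw₂ : wdual (h₂ : (X →L[𝕜] X) →L[𝕜] 𝕜) ≤ 1 :=
        (wdual_le_one_iff hc0 hcb _).2 fun T hT => hm₂ T hT
      have heq' : a • (h₁ : (X →L[𝕜] X) →L[𝕜] 𝕜) + b • (h₂ : (X →L[𝕜] X) →L[𝕜] 𝕜) = g := by
        apply ContinuousLinearMap.ext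
        intro T
        exact DFunLike.congr_fun heq T
      obtain ⟨e₁, e₂⟩ := (mem_extremePoints.1 hg).2 _ hw₁ _ hw₂ ⟨a, b, ha, hb, hab, heq'⟩
      exact congrArg StrongDual.toWeakDual e₁
  exact milman hKcomp (by intro h₁ hm₁ h₂ hm₂ a b ha hb hab; exact hKconv hm₁ hm₂ ha hb hab) hKA hAK hxext
end

section
/- Let X be a finite-dimensional Banach space with numerical radius a norm on L(X), V an n-dimensional subspace of L(X)_w, and T ∈ L(X)_w. If there exist t₁,…,t_h > 0 with Σ tᵢ = 1, extreme points xᵢ* of B_{X*} and xᵢ of B_X with |xᵢ*(xᵢ)| = 1, xᵢ*(T xᵢ) = w(T) for each i, and Σᵢ tᵢ xᵢ*(S xᵢ) = 0 for all S ∈ V, then T is Birkhoff–James orthogonal to V in the numerical radius norm, i.e., w(T + λS) ≥ w(T) for all scalars λ and all S ∈ V. -/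
variable {𝕜 : Type*} [RCLike 𝕜] {X : Type*} [NormedAddCommGroup X] [NormedSpace 𝕜 X]

lemma nrad_ge_aux {X : Type*} [NormedAddCommGroup X] [NormedSpace 𝕜 X]
    (A : X →L[𝕜] X) (f : X →L[𝕜] 𝕜) (x : X)
    (hf1 : ‖f‖ = 1) (hx1 : ‖x‖ = 1) (hfx : ‖f x‖ = 1) :
    ‖f (A x)‖ ≤ nrad A := by
  have ha : f x ≠ 0 := by
    intro h0; rw [h0] at hfx; simp at hfx
  have hbdd : BddAbove {r : ℝ | ∃ (y : X) (g : X →L[𝕜] 𝕜),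
      ‖y‖ = 1 ∧ ‖g‖ = 1 ∧ g y = 1 ∧ r = ‖g (A y)‖} := by
    refine ⟨‖A‖, ?_⟩
    rintro r ⟨y, g, hy, hg, -, rfl⟩
    calc ‖g (A y)‖ ≤ ‖g‖ * ‖A y‖ := g.le_opNorm _
      _ ≤ 1 * (‖A‖ * ‖y‖) := by rw [hg]; gcongr; exact A.le_opNorm y
      _ = ‖A‖ := by rw [hy]; ring
  have hmem : ‖f (A x)‖ ∈ {r : ℝ | ∃ (y : X) (g : X →L[𝕜] 𝕜),
      ‖y‖ = 1 ∧ ‖g‖ = 1 ∧ g y = 1 ∧ r = ‖g (A y)‖} := by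
    refine ⟨x, (f x)⁻¹ • f, hx1, ?_, ?_, ?_⟩
    · rw [norm_smul (f x)⁻¹ f, norm_inv, hfx, hf1]; norm_num
    · simp [inv_mul_cancel₀ ha]
    · simp [norm_smul, norm_inv, hfx]
  exact le_csSup hbdd hmem

/-- Sufficient condition for Birkhoff–James orthogonality `T ⊥_w V` in the numerical radius
norm, in terms of extreme points of the unit balls of `X` and `X*`. -/
theorem stmt_8 {X : Type*} [NormedAddCommGroup X] [NormedSpace 𝕜 X]
    [NormedSpace ℝ X] [IsScalarTower ℝ 𝕜 X] [FiniteDimensional 𝕜 X]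
    (hw : ∀ T : X →L[𝕜] X, nrad T = 0 → T = 0)
    (n : ℕ) (V : Submodule 𝕜 (X →L[𝕜] X)) (hV : Module.finrank 𝕜 V = n)
    (T : X →L[𝕜] X) (h : ℕ) (hh : 0 < h)
    (t : Fin h → ℝ) (ht : ∀ i, 0 < t i) (hts : ∑ i, t i = 1)
    (f : Fin h → (X →L[𝕜] 𝕜)) (x : Fin h → X)
    (hf : ∀ i, f i ∈ Set.extremePoints ℝ (Metric.closedBall (0 : X →L[𝕜] 𝕜) 1))
    (hx : ∀ i, x i ∈ Set.extremePoints ℝ (Metric.closedBall (0 : X) 1))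
    (hfx : ∀ i, ‖f i (x i)‖ = 1)
    (hfT : ∀ i, f i (T (x i)) = (nrad T : 𝕜))
    (hS : ∀ S ∈ V, ∑ i, (t i : 𝕜) * f i (S (x i)) = 0) :
    ∀ S ∈ V, ∀ c : 𝕜, nrad T ≤ nrad (T + c • S) := by
  intro S hSV c
  set A := T + c • S with hAdef
  -- norms of x i and f i are 1
  have hnorm : ∀ i, ‖f i‖ = 1 ∧ ‖x i‖ = 1 := by
    intro i
    have hxb : ‖x i‖ ≤ 1 := by
      simpa using mem_closedBall_zero_iff.mp (hx i).1
    have hfb : ‖f i‖ ≤ 1 := by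
      simpa using mem_closedBall_zero_iff.mp (hf i).1
    have h1 : (1:ℝ) ≤ ‖f i‖ * ‖x i‖ := by
      rw [← hfx i]; exact (f i).le_opNorm (x i)
    have hx0 : (0:ℝ) ≤ ‖x i‖ := norm_nonneg _
    have hf0 : (0:ℝ) ≤ ‖f i‖ := norm_nonneg _
    constructor <;> nlinarith
  have key : ∀ (B : X →L[𝕜] X) (i : Fin h), ‖f i (B (x i))‖ ≤ nrad B := by
    intro B i
    exact nrad_ge_aux B (f i) (x i) (hnorm i).1 (hnorm i).2 (hfx i)
  have h0 : (0:ℝ) ≤ nrad T := le_trans (norm_nonneg _) (key T ⟨0, hh⟩)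
  have hsum : (∑ i, (t i : 𝕜) * f i (A (x i))) = (nrad T : 𝕜) := by
    have hAe : ∀ i, f i (A (x i)) = f i (T (x i)) + c * f i (S (x i)) := by
      intro i; simp [hAdef, map_add, mul_comm]
    calc (∑ i, (t i : 𝕜) * f i (A (x i)))
        = (∑ i, (t i : 𝕜) * f i (T (x i))) + c * ∑ i, (t i : 𝕜) * f i (S (x i)) := by
          rw [Finset.mul_sum, ← Finset.sum_add_distrib]
          refine Finset.sum_congr rfl fun i _ => by rw [hAe i]; ring
      _ = ∑ i, (t i : 𝕜) * f i (T (x i)) := by rw [hS S hSV]; ring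
      _ = ∑ i, (t i : 𝕜) * (nrad T : 𝕜) := by
          exact Finset.sum_congr rfl fun i _ => by rw [hfT i]
      _ = ((∑ i, t i : ℝ) : 𝕜) * (nrad T : 𝕜) := by
          push_cast [Finset.sum_mul]; ring_nf
          exact Finset.sum_congr rfl fun i _ => mul_comm _ _
      _ = (nrad T : 𝕜) := by rw [hts]; push_cast; ring
  calc nrad T = ‖((nrad T : ℝ) : 𝕜)‖ := by
        rw [RCLike.norm_ofReal, abs_of_nonneg h0]
    _ = ‖∑ i, (t i : 𝕜) * f i (A (x i))‖ := by rw [hsum]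
    _ ≤ ∑ i, ‖(t i : 𝕜) * f i (A (x i))‖ := norm_sum_le _ _
    _ = ∑ i, t i * ‖f i (A (x i))‖ := by
        refine Finset.sum_congr rfl fun i _ => ?_
        rw [norm_mul, RCLike.norm_ofReal, abs_of_pos (ht i)]
    _ ≤ ∑ i, t i * nrad A := by
        refine Finset.sum_le_sum fun i _ => ?_
        exact mul_le_mul_of_nonneg_left (key A i) (ht i).le
    _ = nrad A := by rw [← Finset.sum_mul, hts, one_mul]
end

section
/- Let H be a finite-dimensional complex Hilbert space, T ∈ L(H) nonzero, and V a subspace of L(H). If there exist t₁,…,t_h > 0 with Σ tᵢ = 1 and unit vectors x₁,…,x_h ∈ H with |⟨T xᵢ, xᵢ⟩| = w(T) for each i, such that Σᵢ tᵢ · conj(⟨T xᵢ, xᵢ⟩) · ⟨S xᵢ, xᵢ⟩ = 0 for every S ∈ V, then w(T + λS) ≥ w(T) for every scalar λ and every S ∈ V. -/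
open scoped InnerProductSpace

/-- The numerical radius of an operator on a complex Hilbert space. -/
noncomputable def nradH {H : Type*} [NormedAddCommGroup H] [InnerProductSpace ℂ H]
    (T : H →L[ℂ] H) : ℝ :=
  sSup {r : ℝ | ∃ x : H, ‖x‖ = 1 ∧ r = ‖(⟪T x, x⟫_ℂ)‖}

theorem stmt_11 {H : Type*} [NormedAddCommGroup H] [InnerProductSpace ℂ H]
    [FiniteDimensional ℂ H]
    (T : H →L[ℂ] H) (hT : T ≠ 0) (V : Submodule ℂ (H →L[ℂ] H))
    (h : ℕ) (hh : 0 < h) (t : Fin h → ℝ) (ht : ∀ i, 0 < t i) (hts : ∑ i, t i = 1)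
    (x : Fin h → H) (hx : ∀ i, ‖x i‖ = 1)
    (hatt : ∀ i, ‖(⟪T (x i), x i⟫_ℂ)‖ = nradH T)
    (hsum : ∀ S ∈ V, ∑ i, (t i : ℂ) * (starRingEnd ℂ ⟪T (x i), x i⟫_ℂ) * ⟪S (x i), x i⟫_ℂ = 0) :
    ∀ S ∈ V, ∀ c : ℂ, nradH T ≤ nradH (T + c • S) := by
  intro S hS c
  have hbdd : ∀ (R : H →L[ℂ] H), BddAbove {r : ℝ | ∃ y : H, ‖y‖ = 1 ∧ r = ‖(⟪R y, y⟫_ℂ)‖} := by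
    intro R
    refine ⟨‖R‖, ?_⟩
    rintro r ⟨y, hy, rfl⟩
    calc ‖⟪R y, y⟫_ℂ‖ ≤ ‖R y‖ * ‖y‖ := norm_inner_le_norm _ _
      _ ≤ ‖R‖ * ‖y‖ * ‖y‖ := by gcongr; exact R.le_opNorm y
      _ = ‖R‖ := by rw [hy]; ring
  have hle : ∀ (R : H →L[ℂ] H) (y : H), ‖y‖ = 1 → ‖⟪R y, y⟫_ℂ‖ ≤ nradH R := fun R y hy =>
    le_csSup (hbdd R) ⟨y, hy, rfl⟩
  set w := nradH T with hw
  set W := nradH (T + c • S) with hW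
  set a : Fin h → ℂ := fun i => ⟪T (x i), x i⟫_ℂ with ha
  set b : Fin h → ℂ := fun i => ⟪(T + c • S) (x i), x i⟫_ℂ with hb
  have i0 : Fin h := ⟨0, hh⟩
  have hw0 : 0 ≤ w := (hatt i0) ▸ norm_nonneg _
  have hW0 : 0 ≤ W := le_trans (norm_nonneg _) (hle (T + c • S) (x i0) (hx i0))
  have hbS : ∀ i, b i = a i + (starRingEnd ℂ c) * ⟪S (x i), x i⟫_ℂ := by
    intro i
    simp [hb, ha, inner_add_left, inner_smul_left, ContinuousLinearMap.add_apply,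
      ContinuousLinearMap.smul_apply]
    ring
  have key : ((w ^ 2 : ℝ) : ℂ) = ∑ i, (t i : ℂ) * (starRingEnd ℂ (a i)) * b i := by
    have h1 : ∑ i, (t i : ℂ) * (starRingEnd ℂ (a i)) * b i
        = ∑ i, (t i : ℂ) * (starRingEnd ℂ (a i)) * a i
          + (starRingEnd ℂ c) * ∑ i, (t i : ℂ) * (starRingEnd ℂ (a i)) * ⟪S (x i), x i⟫_ℂ := by
      rw [Finset.mul_sum, ← Finset.sum_add_distrib]
      refine Finset.sum_congr rfl fun i _ => ?_
      rw [hbS i]; ring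
    rw [h1, hsum S hS, mul_zero, add_zero]
    have h2 : ∀ i, (starRingEnd ℂ (a i)) * a i = ((w ^ 2 : ℝ) : ℂ) := by
      intro i
      rw [Complex.conj_mul', hatt i]
      push_cast
      ring
    calc ((w ^ 2 : ℝ) : ℂ) = ∑ i, (t i : ℂ) * ((w ^ 2 : ℝ) : ℂ) := by
          rw [← Finset.sum_mul]
          norm_cast
          rw [hts, one_mul]
      _ = ∑ i, (t i : ℂ) * (starRingEnd ℂ (a i)) * a i := by
          refine Finset.sum_congr rfl fun i _ => ?_
          rw [mul_assoc, h2 i]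
  have hineq : w ^ 2 ≤ w * W := by
    have hn : ‖((w ^ 2 : ℝ) : ℂ)‖ = w ^ 2 := by
      simp [abs_of_nonneg (sq_nonneg w)]
    rw [← hn, key]
    calc ‖∑ i, (t i : ℂ) * (starRingEnd ℂ (a i)) * b i‖
        ≤ ∑ i, ‖(t i : ℂ) * (starRingEnd ℂ (a i)) * b i‖ := norm_sum_le _ _
      _ ≤ ∑ i, t i * (w * W) := by
          refine Finset.sum_le_sum fun i _ => ?_
          have hti : ‖((t i : ℝ) : ℂ)‖ = t i := by
            simp [abs_of_nonneg (ht i).le]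
          rw [norm_mul, norm_mul, hti, RCLike.norm_conj, hatt i, mul_assoc]
          exact mul_le_mul_of_nonneg_left
            (mul_le_mul_of_nonneg_left (hle _ (x i) (hx i)) hw0) (ht i).le
      _ = w * W := by rw [← Finset.sum_mul, hts, one_mul]
  rcases eq_or_lt_of_le hw0 with h0 | h0
  · rw [← h0]; exact hW0
  · nlinarith
end

section
/- Let X be a finite-dimensional Banach space with numerical radius a norm on L(X), Z a subspace of X, and T ∈ L(X)_w nu-smooth with M_{w(T)} = { (μ x₀, conj(μ) x₀*) : |μ| = 1 } for some x₀* ∈ E_{X*}, x₀ ∈ E_X with x₀*(x₀) = 1. If x₀ is a smooth point of X and x₀ ⊥_B Z (Birkhoff–James orthogonality in X), then T ⊥_w L(X, Z), i.e., w(T + λS) ≥ w(T) for all scalars λ and all operators S on X with range in Z. -/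
variable {𝕜 : Type*} [RCLike 𝕜] {X : Type*} [NormedAddCommGroup X] [NormedSpace 𝕜 X]

/-- The set `J_w(T)` of norm-one supporting functionals of `T` in `(L(X)_w)*`. -/
noncomputable def Jw (T : X →L[𝕜] X) : Set ((X →L[𝕜] X) →L[𝕜] 𝕜) :=
  {g | wdual g = 1 ∧ g T = (nrad T : 𝕜)}

/-- The numerical radius attainment set `M_{w(T)}`. -/
noncomputable def Mw (T : X →L[𝕜] X) : Set (X × (X →L[𝕜] 𝕜)) :=
  {p | ‖p.1‖ = 1 ∧ ‖p.2‖ = 1 ∧ p.2 p.1 = 1 ∧ ‖p.2 (T p.1)‖ = nrad T}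

/-- If `T` is nu-smooth with `M_{w(T)} = {(μx₀, conj(μ)x₀*)}`, `x₀` is a smooth point of `X`
and `x₀ ⊥_B Z`, then `T ⊥_w L(X,Z)`. -/
theorem stmt_19 {X : Type*} [NormedAddCommGroup X] [NormedSpace 𝕜 X]
    [NormedSpace ℝ X] [IsScalarTower ℝ 𝕜 X] [FiniteDimensional 𝕜 X]
    (hw : ∀ T : X →L[𝕜] X, nrad T = 0 → T = 0)
    (Z : Submodule 𝕜 X) (T : X →L[𝕜] X) (hsm : ∃ g, Jw T = {g})
    (x₀ : X) (f₀ : X →L[𝕜] 𝕜)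
    (hx₀ : x₀ ∈ Set.extremePoints ℝ (Metric.closedBall (0 : X) 1))
    (hf₀ : f₀ ∈ Set.extremePoints ℝ (Metric.closedBall (0 : X →L[𝕜] 𝕜) 1))
    (hfx : f₀ x₀ = 1)
    (hM : Mw T = {p | ∃ μ : 𝕜, ‖μ‖ = 1 ∧ p = (μ • x₀, (starRingEnd 𝕜 μ) • f₀)})
    (hsmooth : ∃ g : X →L[𝕜] 𝕜, {f : X →L[𝕜] 𝕜 | ‖f‖ = 1 ∧ f x₀ = (‖x₀‖ : 𝕜)} = {g})
    (hBJ : ∀ z ∈ Z, ∀ c : 𝕜, ‖x₀‖ ≤ ‖x₀ + c • z‖) :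
    ∀ S : X →L[𝕜] X, (∀ v : X, S v ∈ Z) → ∀ c : 𝕜, nrad T ≤ nrad (T + c • S) := by
  intro S hS c
  classical
  -- basic norm facts
  have hx0ball := hx₀.1
  have hf0ball := hf₀.1
  rw [Metric.mem_closedBall, dist_zero_right] at hx0ball hf0ball
  have hone : (1:ℝ) = ‖f₀ x₀‖ := by rw [hfx]; simp
  have hle : ‖f₀ x₀‖ ≤ ‖f₀‖ * ‖x₀‖ := f₀.le_opNorm x₀
  have hx1 : ‖x₀‖ = 1 := by nlinarith [norm_nonneg x₀, norm_nonneg f₀]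
  have hf1 : ‖f₀‖ = 1 := by nlinarith [norm_nonneg x₀, norm_nonneg f₀]
  -- smoothness: f₀ is the unique norming functional of x₀
  have huniq : ∀ f : X →L[𝕜] 𝕜, ‖f‖ = 1 → f x₀ = 1 → f = f₀ := by
    obtain ⟨g, hg⟩ := hsmooth
    have hf₀mem : f₀ ∈ {f : X →L[𝕜] 𝕜 | ‖f‖ = 1 ∧ f x₀ = (‖x₀‖ : 𝕜)} := by
      refine ⟨hf1, ?_⟩; rw [hfx, hx1]; norm_num
    rw [hg] at hf₀mem
    intro f hfn hfv
    have hfmem : f ∈ {f : X →L[𝕜] 𝕜 | ‖f‖ = 1 ∧ f x₀ = (‖x₀‖ : 𝕜)} := by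
      refine ⟨hfn, ?_⟩; rw [hfv, hx1]; norm_num
    rw [hg] at hfmem
    rw [Set.mem_singleton_iff] at hf₀mem hfmem
    rw [hfmem, hf₀mem]
  -- key: Birkhoff-James + smoothness ⇒ re (f₀ y) ≤ 0
  have key : ∀ y : X, (∀ a : 𝕜, (1:ℝ) ≤ ‖x₀ + a • y‖) → RCLike.re (f₀ y) ≤ 0 := by
    intro y hy
    set t : ℕ → ℝ := fun n => -(1 / ((n:ℝ) + 1)) with ht
    have ht0 : ∀ n, t n < 0 := by
      intro n
      have : (0:ℝ) < 1 / ((n:ℝ)+1) := by positivity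
      simp only [ht]; linarith
    set xn : ℕ → X := fun n => x₀ + ((t n : 𝕜)) • y with hxn
    have hxn_ge : ∀ n, (1:ℝ) ≤ ‖xn n‖ := fun n => hy _
    have hxn_ne : ∀ n, xn n ≠ 0 := by
      intro n h
      have h2 := hxn_ge n
      rw [h, norm_zero] at h2; linarith
    choose f hfn hfv using fun n => exists_dual_vector 𝕜 (xn n) (norm_ne_zero_iff.mpr (hxn_ne n))
    have heval : ∀ n, f n (xn n) = f n x₀ + (t n : 𝕜) * f n y := by
      intro n; simp [hxn, smul_eq_mul, RCLike.real_smul_eq_coe_mul]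
    -- re (f n y) ≤ 0 for all n
    have hre : ∀ n, RCLike.re (f n y) ≤ 0 := by
      intro n
      have h1 : RCLike.re (f n x₀) ≤ 1 := by
        calc RCLike.re (f n x₀) ≤ ‖f n x₀‖ := RCLike.re_le_norm _
          _ ≤ ‖f n‖ * ‖x₀‖ := (f n).le_opNorm x₀
          _ = 1 := by rw [hfn n, hx1]; ring
      have h2 : RCLike.re (f n (xn n)) = ‖xn n‖ := by rw [hfv n]; simp
      have h4 : (‖xn n‖ : ℝ) = RCLike.re (f n x₀) + t n * RCLike.re (f n y) := by
        rw [← h2, heval n, map_add, RCLike.re_ofReal_mul]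
      have h5 : (0:ℝ) ≤ t n * RCLike.re (f n y) := by
        have h6 := hxn_ge n
        linarith
      have h7 := ht0 n
      nlinarith
    -- f n x₀ → 1
    have hbnd : ∀ n, ‖f n x₀ - 1‖ ≤ 2 * (1 / ((n:ℝ)+1) * ‖y‖) := by
      intro n
      have e1 : f n x₀ - 1 = ((‖xn n‖ : ℝ) - 1 : 𝕜) - (t n : 𝕜) * f n y := by
        have hthis := heval n
        rw [hfv n] at hthis
        linear_combination -hthis
      have e2 : |‖xn n‖ - 1| ≤ |t n| * ‖y‖ := by
        have : ‖xn n‖ - ‖x₀‖ ≤ ‖xn n - x₀‖ ∧ ‖x₀‖ - ‖xn n‖ ≤ ‖x₀ - xn n‖ :=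
          ⟨norm_sub_norm_le _ _, norm_sub_norm_le _ _⟩
        have hsub : xn n - x₀ = (t n : 𝕜) • y := by simp [hxn]
        have hn1 : ‖xn n - x₀‖ = |t n| * ‖y‖ := by
          rw [hsub, norm_smul, RCLike.norm_ofReal]
        have hn2 : ‖x₀ - xn n‖ = |t n| * ‖y‖ := by
          rw [← norm_neg, neg_sub, hn1]
        rw [abs_sub_le_iff]
        constructor
        · rw [← hx1, ← hn1]; exact this.1
        · rw [← hx1, ← hn2]; exact this.2
      have e3 : ‖(t n : 𝕜) * f n y‖ ≤ |t n| * ‖y‖ := by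
        rw [norm_mul, RCLike.norm_ofReal]
        have : ‖f n y‖ ≤ ‖f n‖ * ‖y‖ := (f n).le_opNorm y
        rw [hfn n, one_mul] at this
        exact mul_le_mul_of_nonneg_left this (abs_nonneg _)
      have e4 : |t n| = 1 / ((n:ℝ)+1) := by
        simp only [ht, abs_neg, abs_div, abs_one]
        congr 1
        exact abs_of_pos (by positivity)
      calc ‖f n x₀ - 1‖ ≤ ‖((‖xn n‖ : ℝ) - 1 : 𝕜)‖ + ‖(t n : 𝕜) * f n y‖ := by
            rw [e1]; exact norm_sub_le _ _
        _ ≤ |t n| * ‖y‖ + |t n| * ‖y‖ := by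
            refine add_le_add ?_ e3
            have hc : ((‖xn n‖ : ℝ) : 𝕜) - 1 = ((‖xn n‖ - 1 : ℝ) : 𝕜) := by push_cast; ring
            rw [hc, RCLike.norm_ofReal]
            exact e2
        _ = 2 * (1 / ((n:ℝ)+1) * ‖y‖) := by rw [e4]; ring
    have htend0 : Filter.Tendsto (fun n : ℕ => 2 * (1 / ((n:ℝ)+1) * ‖y‖)) Filter.atTop (nhds 0) := by
      have := (tendsto_one_div_add_atTop_nhds_zero_nat.mul_const ‖y‖).const_mul 2
      simpa using this
    have htend1 : Filter.Tendsto (fun n => f n x₀) Filter.atTop (nhds 1) := by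
      rw [tendsto_iff_norm_sub_tendsto_zero]
      exact squeeze_zero (fun n => norm_nonneg _) hbnd htend0
    -- compactness of the dual ball
    haveI : ProperSpace (X →L[𝕜] 𝕜) := FiniteDimensional.proper 𝕜 _
    have hcompact : IsCompact (Metric.closedBall (0 : X →L[𝕜] 𝕜) 1) :=
      isCompact_closedBall _ _
    have hmem : ∀ n, f n ∈ Metric.closedBall (0 : X →L[𝕜] 𝕜) 1 := by
      intro n; rw [Metric.mem_closedBall, dist_zero_right, hfn n]
    obtain ⟨g, hgmem, φ, hφ, hconv⟩ := hcompact.tendsto_subseq hmem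
    have hgn : ‖g‖ = 1 := by
      have h1 : Filter.Tendsto (fun n => ‖f (φ n)‖) Filter.atTop (nhds ‖g‖) :=
        (continuous_norm.tendsto g).comp hconv
      have h2 : Filter.Tendsto (fun n => ‖f (φ n)‖) Filter.atTop (nhds 1) := by
        simp only [hfn]; exact tendsto_const_nhds
      exact tendsto_nhds_unique h1 h2
    have hgx : g x₀ = 1 := by
      have h1 : Filter.Tendsto (fun n => f (φ n) x₀) Filter.atTop (nhds (g x₀)) :=
        ((ContinuousLinearMap.apply 𝕜 𝕜 x₀).continuous.tendsto g).comp hconv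
      have h2 : Filter.Tendsto (fun n => f (φ n) x₀) Filter.atTop (nhds 1) :=
        htend1.comp hφ.tendsto_atTop
      exact tendsto_nhds_unique h1 h2
    have hgf : g = f₀ := huniq g hgn hgx
    have h1 : Filter.Tendsto (fun n => RCLike.re (f (φ n) y)) Filter.atTop
        (nhds (RCLike.re (g y))) :=
      (RCLike.continuous_re.tendsto _).comp
        (((ContinuousLinearMap.apply 𝕜 𝕜 y).continuous.tendsto g).comp hconv)
    have : RCLike.re (g y) ≤ 0 :=
      le_of_tendsto h1 (Filter.Eventually.of_forall fun n => hre (φ n))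
    rwa [hgf] at this
  -- f₀ vanishes on Z
  have hz0 : ∀ z ∈ Z, f₀ z = 0 := by
    intro z hzZ
    have hall : ∀ a : 𝕜, RCLike.re (a * f₀ z) ≤ 0 := by
      intro a
      have hkey := key (a • z) ?_
      · rwa [map_smul, smul_eq_mul] at hkey
      · intro b
        have hb := hBJ z hzZ (b * a)
        rw [hx1] at hb
        rwa [← smul_smul] at hb
    have h1 := hall (starRingEnd 𝕜 (f₀ z))
    rw [RCLike.conj_mul] at h1
    have h2 : ‖f₀ z‖ ^ 2 ≤ 0 := by
      rw [← RCLike.ofReal_pow, RCLike.ofReal_re] at h1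
      exact h1
    have h3 : ‖f₀ z‖ = 0 := by nlinarith [norm_nonneg (f₀ z)]
    exact norm_eq_zero.mp h3
  -- (x₀, f₀) attains the numerical radius of T
  have hMmem : (x₀, f₀) ∈ Mw T := by
    rw [hM]
    exact ⟨1, by simp, by simp⟩
  have hTval : ‖f₀ (T x₀)‖ = nrad T := hMmem.2.2.2
  -- the numerical radius dominates ‖f₀ (A x₀)‖
  have hmemA : ∀ A : X →L[𝕜] X, ‖f₀ (A x₀)‖ ≤ nrad A := by
    intro A
    have hbdd : BddAbove {r : ℝ | ∃ (x : X) (f : X →L[𝕜] 𝕜),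
        ‖x‖ = 1 ∧ ‖f‖ = 1 ∧ f x = 1 ∧ r = ‖f (A x)‖} := by
      refine ⟨‖A‖, ?_⟩
      rintro r ⟨x, f, hx, hf, hfx', rfl⟩
      calc ‖f (A x)‖ ≤ ‖f‖ * ‖A x‖ := f.le_opNorm _
        _ ≤ ‖f‖ * (‖A‖ * ‖x‖) := by
            refine mul_le_mul_of_nonneg_left (A.le_opNorm x) (norm_nonneg _)
        _ = ‖A‖ := by rw [hx, hf]; ring
    exact le_csSup hbdd ⟨x₀, f₀, hx1, hf1, hfx, rfl⟩
  -- conclude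
  calc nrad T = ‖f₀ (T x₀)‖ := hTval.symm
    _ = ‖f₀ ((T + c • S) x₀)‖ := by
        have h : (T + c • S) x₀ = T x₀ + c • S x₀ := by simp
        rw [h, map_add, map_smul, hz0 (S x₀) (hS x₀), smul_zero, add_zero]
    _ ≤ nrad (T + c • S) := hmemA _
end
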